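/- Let θ > 0, k ≥ 2 an integer, and f₁ ≥ ⋯ ≥ f_k ≥ 0 with (k−1) f_k + 2θ − Σᵢ₌₁^{k−1} fᵢ ≤ 0. If (w₁,…,w_k) ∈ [0,1]^k with Σᵢ wᵢ ≤ 1 maximizes Σᵢ (wᵢ fᵢ − θ wᵢ²) over that constraint set, then w_k = 0. More precisely, for any feasible (w̃₁,…,w̃_k), setting w_k = 0 and wᵢ = w̃ᵢ + w̃_k/(k−1) for i < k yields Σᵢ (wᵢ fᵢ − θ wᵢ²) ≥ Σᵢ (w̃ᵢ fᵢ − θ w̃ᵢ²) + θ w̃_k². -/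

import Mathlib

/-- Let `k ≥ 2`, `f₁ ≥ ⋯ ≥ f_k ≥ 0` with
`(k−1) f_k + 2θ − ∑_{i<k} fᵢ ≤ 0`.  Any maximizer of `∑ (wᵢ fᵢ − θ wᵢ²)` over
`{w ∈ [0,1]^k : ∑ wᵢ ≤ 1}` has `w_k = 0`; more precisely, redistributing
`w̃_k` evenly over the first `k−1` coordinates improves the value by at least
`θ w̃_k²`.  (Indices `0,…,k−1`; `f (k-1)` is the last value.) -/
theorem stmt3 (θ : ℝ) (hθ : 0 < θ) (k : ℕ) (hk : 2 ≤ k)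
    (f : ℕ → ℝ) (hmono : ∀ i j, i ≤ j → j < k → f j ≤ f i)
    (hf0 : ∀ i < k, 0 ≤ f i)
    (hcond : ((k : ℝ) - 1) * f (k - 1) + 2 * θ - ∑ i ∈ Finset.range (k - 1), f i ≤ 0) :
    (∀ wt : ℕ → ℝ, (∀ i < k, wt i ∈ Set.Icc (0 : ℝ) 1) →
      ∑ i ∈ Finset.range k, wt i ≤ 1 →
      ∀ w : ℕ → ℝ, w (k - 1) = 0 →
        (∀ i < k - 1, w i = wt i + wt (k - 1) / ((k : ℝ) - 1)) →
        ∑ i ∈ Finset.range k, (wt i * f i - θ * (wt i) ^ 2) + θ * (wt (k - 1)) ^ 2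
          ≤ ∑ i ∈ Finset.range k, (w i * f i - θ * (w i) ^ 2)) ∧
    (∀ w : ℕ → ℝ, (∀ i < k, w i ∈ Set.Icc (0 : ℝ) 1) →
      ∑ i ∈ Finset.range k, w i ≤ 1 →
      (∀ v : ℕ → ℝ, (∀ i < k, v i ∈ Set.Icc (0 : ℝ) 1) →
        ∑ i ∈ Finset.range k, v i ≤ 1 →
        ∑ i ∈ Finset.range k, (v i * f i - θ * (v i) ^ 2)
          ≤ ∑ i ∈ Finset.range k, (w i * f i - θ * (w i) ^ 2)) →
      w (k - 1) = 0) := by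
  obtain ⟨m, rfl⟩ : ∃ m, k = m + 1 := ⟨k - 1, by omega⟩
  have hm : 1 ≤ m := by omega
  have hm0 : (0 : ℝ) < m := by exact_mod_cast Nat.pos_of_ne_zero (by omega)
  simp only [Nat.add_sub_cancel] at *
  have hcast : ((m : ℝ) + 1) - 1 = m := by ring
  have hcast' : ((↑(m + 1) : ℝ) - 1) = m := by push_cast; ring
  push_cast at hcond
  rw [hcast] at hcond
  have hcond' : (m : ℝ) * f m + 2 * θ ≤ ∑ i ∈ Finset.range m, f i := by linarith
  have main : ∀ wt : ℕ → ℝ, (∀ i < m + 1, wt i ∈ Set.Icc (0 : ℝ) 1) →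
      ∑ i ∈ Finset.range (m + 1), wt i ≤ 1 →
      ∀ w : ℕ → ℝ, w m = 0 →
        (∀ i < m, w i = wt i + wt m / ((↑(m + 1) : ℝ) - 1)) →
        ∑ i ∈ Finset.range (m + 1), (wt i * f i - θ * (wt i) ^ 2) + θ * (wt m) ^ 2
          ≤ ∑ i ∈ Finset.range (m + 1), (w i * f i - θ * (w i) ^ 2) := by
    intro wt hwt hsum w hwm hw
    set c : ℝ := wt m / m with hc
    have hw' : ∀ i < m, w i = wt i + c := by
      intro i hi
      rw [hw i hi, hcast']
    have ht0 : 0 ≤ wt m := (hwt m (by omega)).1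
    have hc0 : 0 ≤ c := div_nonneg ht0 hm0.le
    have htc : wt m = m * c := by rw [hc]; field_simp [hm0.ne']
    have hW0 : 0 ≤ ∑ i ∈ Finset.range m, wt i :=
      Finset.sum_nonneg fun i hi => (hwt i (by have := Finset.mem_range.mp hi; omega)).1
    rw [Finset.sum_range_succ, Finset.sum_range_succ, hwm]
    rw [Finset.sum_range_succ] at hsum
    have hsplit : ∀ i ∈ Finset.range m, w i * f i - θ * w i ^ 2 =
        (wt i * f i - θ * wt i ^ 2) + (c * f i - (2 * θ * c) * wt i - θ * c ^ 2) := by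
      intro i hi
      rw [hw' i (Finset.mem_range.mp hi)]
      ring
    rw [Finset.sum_congr rfl hsplit, Finset.sum_add_distrib]
    have hS : ∑ i ∈ Finset.range m, (c * f i - (2 * θ * c) * wt i - θ * c ^ 2) =
        c * (∑ i ∈ Finset.range m, f i) - (2 * θ * c) * (∑ i ∈ Finset.range m, wt i)
          - (m : ℝ) * (θ * c ^ 2) := by
      rw [Finset.sum_sub_distrib, Finset.sum_sub_distrib, ← Finset.mul_sum, ← Finset.mul_sum,
        Finset.sum_const, Finset.card_range, nsmul_eq_mul]
    rw [hS]
    set S : ℝ := ∑ i ∈ Finset.range m, f i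
    set W : ℝ := ∑ i ∈ Finset.range m, wt i
    have hWle : W + (m : ℝ) * c ≤ 1 := by rw [← htc]; linarith
    have h1 : (0 : ℝ) ≤ S - 2 * θ - (m : ℝ) * f m := by linarith
    have h2 : (0 : ℝ) ≤ 2 - (2 * W + (m : ℝ) * c) := by nlinarith
    rw [htc]
    nlinarith [mul_nonneg hc0 h1, mul_nonneg (mul_nonneg hθ.le hc0) h2]
  refine ⟨main, ?_⟩
  intro w hw hsum hmax
  set v : ℕ → ℝ := fun i => if i < m then w i + w m / ((↑(m + 1) : ℝ) - 1) else 0 with hv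
  have hwm0 : 0 ≤ w m := (hw m (by omega)).1
  have hvm : v m = 0 := by simp [hv]
  have hvlt : ∀ i < m, v i = w i + w m / ((↑(m + 1) : ℝ) - 1) := by
    intro i hi; simp [hv, hi]
  have hdivnn : 0 ≤ w m / ((↑(m + 1) : ℝ) - 1) := by
    rw [hcast']; exact div_nonneg hwm0 hm0.le
  have hsumv : ∑ i ∈ Finset.range (m + 1), v i = ∑ i ∈ Finset.range (m + 1), w i := by
    rw [Finset.sum_range_succ, Finset.sum_range_succ, hvm,
      Finset.sum_congr rfl (fun i hi => hvlt i (Finset.mem_range.mp hi)),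
      Finset.sum_add_distrib, Finset.sum_const, Finset.card_range, nsmul_eq_mul, hcast']
    have : (m : ℝ) * (w m / m) = w m := by field_simp
    rw [this]
    ring
  have hvfeas : ∀ i < m + 1, v i ∈ Set.Icc (0 : ℝ) 1 := by
    intro i hi
    rcases lt_or_ge i m with h | h
    · constructor
      · rw [hvlt i h]
        have := (hw i (by omega)).1
        linarith
      · -- v i ≤ sum of v ≤ 1
        have hle : v i ≤ ∑ j ∈ Finset.range (m + 1), v j := by
          apply Finset.single_le_sum (f := v)
          · intro j hj
            rcases lt_or_ge j m with h' | h'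
            · rw [hvlt j h']
              have := (hw j (by omega)).1
              linarith
            · have : v j = 0 := by simp [hv, not_lt.mpr h']
              rw [this]
          · exact Finset.mem_range.mpr (by omega)
        rw [hsumv] at hle
        linarith
    · have : i = m := by omega
      rw [this, hvm]
      exact ⟨le_refl 0, zero_le_one⟩
  have h1 := main w hw hsum v hvm hvlt
  have h2 := hmax v hvfeas (by rw [hsumv]; exact hsum)
  have hsq : w m ^ 2 ≤ 0 := by nlinarith
  have : w m ^ 2 = 0 := le_antisymm hsq (sq_nonneg _)
  exact pow_eq_zero_iff (by norm_num) |>.mp this
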